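/- arXiv:1712.03754 — 2 statements merged into one kernel-verified Lean document; each statement's English description precedes it below -/
import Mathlib

section
/- Let α_j ∈ ℝ, x₁ < … < x_n, and α_k < 0 for some k. Define f(x) = e^{−(α_k/2)x} for x < x_k and f(x) = e^{−α_k x_k} e^{(α_k/2)x} for x ≥ x_k. If (α_k/2)e^{−α_k x_k} + Σ_{x_j < x_k} α_j e^{−α_k x_j} + e^{−2α_k x_k} Σ_{x_j > x_k} α_j e^{α_k x_j} < 0, then ∫_ℝ |f′|² dx + Σ_{j=1}^n α_j |f(x_j)|² < 0. -/
open MeasureTheory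

/-- The function `f(x) = e^{-(c/2)x}` for `x < p` and `f(x) = e^{-cp} e^{(c/2)x}` for
`x ≥ p` (the ground state of `-Δ + c δ_p` for `c < 0`). -/
noncomputable def groundState (c p : ℝ) : ℝ → ℝ := fun y =>
  if y < p then Real.exp (-(c / 2) * y) else Real.exp (-c * p) * Real.exp (c / 2 * y)

/-- Its derivative (away from `p`). -/
noncomputable def groundState' (c p : ℝ) : ℝ → ℝ := fun y =>
  if y < p then -(c / 2) * Real.exp (-(c / 2) * y)
  else Real.exp (-c * p) * (c / 2) * Real.exp (c / 2 * y)

open Set Filter Topology in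
lemma aux_integral_exp_neg_Ioi {b : ℝ} (hb : 0 < b) (c : ℝ) :
    ∫ x in Set.Ioi c, Real.exp (-b * x) = Real.exp (-b * c) / b := by
  have hderiv : ∀ y ∈ Set.Ici c,
      HasDerivAt (fun x => -Real.exp (-b * x) / b) (Real.exp (-b * y)) y := by
    intro y _
    have h := (((hasDerivAt_id y).const_mul (-b)).exp).neg.div_const b
    have h2 : HasDerivAt (fun x => -Real.exp (-b * x) / b)
        (-(Real.exp (-b * y) * (-b * 1)) / b) y := h
    convert h2 using 1
    rw [eq_div_iff hb.ne']
    ring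
  have htop : Tendsto (fun x => -Real.exp (-b * x) / b) atTop (𝓝 0) := by
    have h1 : Tendsto (fun x : ℝ => Real.exp (-b * x)) atTop (𝓝 0) :=
      Real.tendsto_exp_atBot.comp (tendsto_id.const_mul_atTop_of_neg (by linarith))
    simpa using h1.neg.div_const b
  have := integral_Ioi_of_hasDerivAt_of_tendsto' hderiv (exp_neg_integrableOn_Ioi c hb) htop
  rw [this]
  ring

open Set Filter Topology in
lemma aux_integral_exp_Iic {b : ℝ} (hb : 0 < b) (c : ℝ) :
    ∫ x in Set.Iic c, Real.exp (b * x) = Real.exp (b * c) / b := by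
  have h := integral_comp_neg_Iic c (fun x => Real.exp (-b * x))
  simp only [neg_mul_neg] at h
  rw [h, aux_integral_exp_neg_Ioi hb, neg_mul_neg]

open Set in
lemma aux_integrableOn_exp_Iic {b : ℝ} (hb : 0 < b) (c : ℝ) :
    IntegrableOn (fun x : ℝ => Real.exp (b * x)) (Set.Iic c) := by
  have h0 : IntegrableOn (fun x : ℝ => Real.exp (-b * x)) (Ioi (-c)) :=
    exp_neg_integrableOn_Ioi (-c) hb
  have := (MeasurePreserving.integrableOn_comp_preimage
    (Measure.measurePreserving_neg (volume : Measure ℝ))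
    (Homeomorph.neg ℝ).measurableEmbedding).2 h0
  have h1 : IntegrableOn (fun x : ℝ => Real.exp (b * x)) ((fun x : ℝ => -x) ⁻¹' Ioi (-c)) := by
    refine this.congr_fun ?_ ?_
    · intro y _; simp [Function.comp, neg_mul_neg]
    · exact (Homeomorph.neg ℝ).measurable measurableSet_Ioi
  have h2 : ((fun x : ℝ => -x) ⁻¹' Ioi (-c)) = Iio c := by
    ext y; simp
  rw [h2] at h1
  have h3 : (Iic c : Set ℝ) =ᵐ[volume] Iio c := (Iio_ae_eq_Iic (a := c)).symm
  exact h1.congr_set_ae h3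

lemma exp_sq (a : ℝ) : Real.exp a ^ 2 = Real.exp (2 * a) := by
  rw [sq, ← Real.exp_add, two_mul]

lemma gs'_sq_lt {c p t : ℝ} (h : t < p) :
    groundState' c p t ^ 2 = c ^ 2 / 4 * Real.exp (-c * t) := by
  simp only [groundState', if_pos h]
  rw [mul_pow, exp_sq, show 2 * (-(c / 2) * t) = -c * t by ring,
    show (-(c / 2)) ^ 2 = c ^ 2 / 4 by ring]

lemma gs'_sq_ge {c p t : ℝ} (h : ¬ t < p) :
    groundState' c p t ^ 2 = c ^ 2 / 4 * Real.exp (-2 * c * p) * Real.exp (c * t) := by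
  simp only [groundState', if_neg h]
  rw [mul_pow, mul_pow, exp_sq, exp_sq, show 2 * (c / 2 * t) = c * t by ring,
    show 2 * (-c * p) = -2 * c * p by ring, show (c / 2) ^ 2 = c ^ 2 / 4 by ring]
  ring

lemma gs_sq_lt {c p t : ℝ} (h : t < p) :
    groundState c p t ^ 2 = Real.exp (-c * t) := by
  simp only [groundState, if_pos h]
  rw [exp_sq, show 2 * (-(c / 2) * t) = -c * t by ring]

lemma gs_sq_ge {c p t : ℝ} (h : ¬ t < p) :
    groundState c p t ^ 2 = Real.exp (-2 * c * p) * Real.exp (c * t) := by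
  simp only [groundState, if_neg h]
  rw [mul_pow, exp_sq, exp_sq, show 2 * (c / 2 * t) = c * t by ring,
    show 2 * (-c * p) = -2 * c * p by ring]

open Set Topology in
lemma integral_gs'_sq {c : ℝ} (hc : c < 0) (p : ℝ) :
    (∫ t : ℝ, groundState' c p t ^ 2) = -(c / 2) * Real.exp (-c * p) := by
  have hb : 0 < -c := by linarith
  have hIio : IntegrableOn (fun t => groundState' c p t ^ 2) (Iio p) := by
    have h0 : IntegrableOn (fun t : ℝ => c ^ 2 / 4 * Real.exp (-c * t)) (Iic p) :=
      (aux_integrableOn_exp_Iic hb p).const_mul _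
    exact ((h0.mono_set Iio_subset_Iic_self).congr_fun
      (fun t ht => (gs'_sq_lt ht).symm) measurableSet_Iio)
  have hIci : IntegrableOn (fun t => groundState' c p t ^ 2) (Ici p) := by
    have h0 : IntegrableOn
        (fun t : ℝ => c ^ 2 / 4 * Real.exp (-2 * c * p) * Real.exp (-(-c) * t)) (Ioi p) :=
      (exp_neg_integrableOn_Ioi p hb).const_mul _
    have h1 : IntegrableOn (fun t => groundState' c p t ^ 2) (Ioi p) := by
      refine h0.congr_fun (fun t ht => ?_) measurableSet_Ioi
      rw [gs'_sq_ge (not_lt.mpr (le_of_lt ht)), neg_neg]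
    exact h1.congr_set_ae (Ioi_ae_eq_Ici (a := p)).symm
  have hsplit : (∫ t : ℝ, groundState' c p t ^ 2) =
      (∫ t in Iio p, groundState' c p t ^ 2) + ∫ t in Ici p, groundState' c p t ^ 2 := by
    rw [← setIntegral_univ, ← Set.Iio_union_Ici (a := p),
      setIntegral_union (Set.Iio_disjoint_Ici le_rfl) measurableSet_Ici hIio hIci]
  have h1 : (∫ t in Iio p, groundState' c p t ^ 2) = -(c / 4) * Real.exp (-c * p) := by
    rw [setIntegral_congr_fun measurableSet_Iio (fun t ht => gs'_sq_lt ht),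
      integral_const_mul, setIntegral_congr_set (Iio_ae_eq_Iic (a := p)),
      show (fun t : ℝ => Real.exp (-c * t)) = fun t : ℝ => Real.exp (-c * t) from rfl]
    rw [aux_integral_exp_Iic hb p]
    have hc0 : c ≠ 0 := ne_of_lt hc
    field_simp
  have h2 : (∫ t in Ici p, groundState' c p t ^ 2) = -(c / 4) * Real.exp (-c * p) := by
    rw [← setIntegral_congr_set (Ioi_ae_eq_Ici (a := p)),
      setIntegral_congr_fun measurableSet_Ioi
        (fun t ht => gs'_sq_ge (not_lt.mpr (le_of_lt ht))),
      integral_const_mul]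
    have : ∫ t in Ioi p, Real.exp (c * t) = Real.exp (-(-c) * p) / (-c) := by
      rw [← aux_integral_exp_neg_Ioi hb p]
      congr 1 with t
      rw [neg_neg]
    rw [this, neg_neg]
    rw [show Real.exp (-2 * c * p) = Real.exp (-c * p) * Real.exp (-c * p) by
      rw [← Real.exp_add]; ring_nf]
    rw [show Real.exp (c * p) = (Real.exp (-c * p))⁻¹ by
      rw [← Real.exp_neg]; ring_nf]
    have hep : Real.exp (-c * p) ≠ 0 := (Real.exp_pos _).ne'
    have hc0 : c ≠ 0 := ne_of_lt hc
    field_simp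
  rw [hsplit, h1, h2]
  ring

/-- Let `x₁ < … < x_n`, `α_k < 0`, and `f = groundState (α_k) (x_k)`. If
`(α_k/2)e^{-α_k x_k} + ∑_{x_j < x_k} α_j e^{-α_k x_j}
  + e^{-2α_k x_k} ∑_{x_j > x_k} α_j e^{α_k x_j} < 0`,
then `∫ |f'|² dx + ∑_j α_j |f(x_j)|² < 0`. -/
theorem stmt13
    (n : ℕ) (x : Fin n → ℝ) (hx : StrictMono x) (α : Fin n → ℝ)
    (k : Fin n) (hαk : α k < 0)
    (hcond :
      α k / 2 * Real.exp (-(α k) * x k) +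
        (∑ j ∈ Finset.univ.filter (fun j => x j < x k), α j * Real.exp (-(α k) * x j)) +
        Real.exp (-2 * α k * x k) *
          ∑ j ∈ Finset.univ.filter (fun j => x k < x j), α j * Real.exp (α k * x j)
        < 0) :
    (∫ t : ℝ, groundState' (α k) (x k) t ^ 2) +
      (∑ j, α j * groundState (α k) (x k) (x j) ^ 2) < 0 := by
  classical
  set c := α k with hc
  set p := x k with hp
  have hI := integral_gs'_sq hαk p
  -- split the sum
  have hfilter : (Finset.univ.filter (fun j => ¬ x j < p)) =
      insert k (Finset.univ.filter (fun j => p < x j)) := by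
    ext j
    simp only [Finset.mem_filter, Finset.mem_univ, true_and, Finset.mem_insert, not_lt]
    constructor
    · intro h
      rcases eq_or_lt_of_le h with h' | h'
      · left; exact hx.injective h'.symm
      · right; exact h'
    · rintro (rfl | h)
      · exact le_rfl
      · exact h.le
  have hknot : k ∉ Finset.univ.filter (fun j => p < x j) := by
    simp [hp]
  have hsum : (∑ j, α j * groundState c p (x j) ^ 2) =
      (∑ j ∈ Finset.univ.filter (fun j => x j < p), α j * Real.exp (-c * x j)) +
        (α k * Real.exp (-c * p) +
          Real.exp (-2 * c * p) *
            ∑ j ∈ Finset.univ.filter (fun j => p < x j), α j * Real.exp (c * x j)) := by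
    rw [← Finset.sum_filter_add_sum_filter_not Finset.univ (fun j => x j < p)]
    congr 1
    · exact Finset.sum_congr rfl (fun j hj => by
        rw [gs_sq_lt (Finset.mem_filter.mp hj).2])
    · rw [hfilter, Finset.sum_insert hknot]
      congr 1
      · rw [gs_sq_ge (lt_irrefl p),
          show Real.exp (-2 * c * p) * Real.exp (c * p) = Real.exp (-c * p) by
            rw [← Real.exp_add]; ring_nf]
      · rw [Finset.mul_sum]
        exact Finset.sum_congr rfl (fun j hj => by
          rw [gs_sq_ge (not_lt.mpr (le_of_lt (Finset.mem_filter.mp hj).2))]; ring)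
  rw [hI, hsum]
  have hEq : -(c / 2) * Real.exp (-c * p) + c * Real.exp (-c * p)
      = c / 2 * Real.exp (-c * p) := by ring
  linarith [hcond, hEq]
end

section
/- Let a₀ = 1, b₀ = 0 and λ < 0, and for a finite set of points x₁ < … < x_k with strengths α₁, …, α_k ∈ ℝ define recursively (a_j, b_j) from (a_{j−1}, b_{j−1}) by requiring that the piecewise function f(x) = a_j e^{√(−λ)x} + b_j e^{−√(−λ)x} on (x_j, x_{j+1}) is continuous at each x_j and satisfies f′(x_j+) − f′(x_j−) = α_j f(x_j). Then λ is an eigenvalue of −Δ + Σ_{j=1}^k α_j δ_{x_j} if and only if a_k = 0; equivalently, a nonzero f ∈ L²(ℝ) of this piecewise-exponential form satisfying all matching conditions exists iff a_k(λ) = 0. -/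
open MeasureTheory

open MeasureTheory Filter Set

lemma stepScale (s al E F ap bp an bn cp dp cn dn mu : ℝ)
    (hs : s ≠ 0) (hE : E ≠ 0) (hF : F ≠ 0)
    (h1 : ap*E + bp*F = an*E + bn*F)
    (h2 : s*(an*E - bn*F) - s*(ap*E - bp*F) = al*(an*E + bn*F))
    (h1' : cp*E + dp*F = cn*E + dn*F)
    (h2' : s*(cn*E - dn*F) - s*(cp*E - dp*F) = al*(cn*E + dn*F))
    (hc : cp = mu*ap) (hd : dp = mu*bp) : cn = mu*an ∧ dn = mu*bn := by
  have hA : 2*s*E*an = 2*s*E*ap + al*(ap*E + bp*F) := by linear_combination (-(s+al))*h1 + h2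
  have hB : 2*s*F*bn = 2*s*F*bp - al*(ap*E + bp*F) := by linear_combination (al - s)*h1 - h2
  have hC : 2*s*E*cn = 2*s*E*cp + al*(cp*E + dp*F) := by linear_combination (-(s+al))*h1' + h2'
  have hD : 2*s*F*dn = 2*s*F*dp - al*(cp*E + dp*F) := by linear_combination (al - s)*h1' - h2'
  have h2sE : (2*s*E) ≠ 0 := mul_ne_zero (mul_ne_zero two_ne_zero hs) hE
  have h2sF : (2*s*F) ≠ 0 := mul_ne_zero (mul_ne_zero two_ne_zero hs) hF
  constructor
  · apply mul_left_cancel₀ h2sE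
    rw [hC, hc, hd]; linear_combination (-mu) * hA
  · apply mul_left_cancel₀ h2sF
    rw [hD, hc, hd]; linear_combination (-mu) * hB

lemma sqBig_below {g : ℝ → ℝ} (hg : Integrable g) (T : ℝ) (h : ∀ t < T, 1 ≤ g t) : False := by
  have h1 := hg.measure_ge_lt_top one_pos
  have h2 : Set.Iio T ⊆ {x | 1 ≤ g x} := fun t ht => h t ht
  have h3 := (measure_mono h2).trans_lt h1
  rw [Real.volume_Iio] at h3
  exact lt_irrefl _ h3

lemma sqBig_above {g : ℝ → ℝ} (hg : Integrable g) (T : ℝ) (h : ∀ t, T < t → 1 ≤ g t) : False := by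
  have h1 := hg.measure_ge_lt_top one_pos
  have h2 : Set.Ioi T ⊆ {x | 1 ≤ g x} := fun t ht => h t ht
  have h3 := (measure_mono h2).trans_lt h1
  rw [Real.volume_Ioi] at h3
  exact lt_irrefl _ h3

lemma absTendsto (s A B : ℝ) (hs : 0 < s) (hA : A ≠ 0) :
    Tendsto (fun t => |A * Real.exp (s*t) + B * Real.exp (-s*t)|) atTop atTop := by
  have hst : Tendsto (fun t : ℝ => s*t) atTop atTop := (tendsto_id (α := ℝ)).const_mul_atTop hs
  have h1 : Tendsto (fun t => |A| * Real.exp (s*t)) atTop atTop :=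
    (Real.tendsto_exp_atTop.comp hst).const_mul_atTop (abs_pos.2 hA)
  have h2 : Tendsto (fun t => -(|B| * Real.exp (-s*t))) atTop (nhds (-(|B| * 0))) := by
    apply Tendsto.neg
    apply Tendsto.const_mul
    apply Real.tendsto_exp_atBot.comp
    have : Tendsto (fun t : ℝ => -(s*t)) atTop atBot := tendsto_neg_atTop_atBot.comp hst
    exact this.congr (fun t => by ring)
  have h3 : Tendsto (fun t => |A| * Real.exp (s*t) - |B| * Real.exp (-s*t)) atTop atTop := by
    have := h1.atTop_add h2
    exact this.congr (fun t => by ring)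
  apply tendsto_atTop_mono _ h3
  intro t
  calc |A| * Real.exp (s*t) - |B| * Real.exp (-s*t)
      = |A * Real.exp (s*t)| - |B * Real.exp (-s*t)| := by
        rw [abs_mul, abs_mul, abs_of_pos (Real.exp_pos _), abs_of_pos (Real.exp_pos _)]
    _ ≤ |A * Real.exp (s*t) + B * Real.exp (-s*t)| := by
        have := abs_sub_abs_le_abs_sub (A * Real.exp (s*t))  (-(B * Real.exp (-s*t)))
        simp only [abs_neg, sub_neg_eq_add] at this
        exact this
open MeasureTheory Filter Set Classical

open Classical in
noncomputable def Ncnt {k : ℕ} (x : Fin k → ℝ) (t : ℝ) : ℕ :=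
  (Finset.univ.filter fun j : Fin k => x j ≤ t).card

lemma Ncnt_le {k : ℕ} (x : Fin k → ℝ) (t : ℝ) : Ncnt x t ≤ k := by
  classical
  exact le_trans (Finset.card_filter_le _ _) (by simp)

lemma Ncnt_mem_iff {k : ℕ} {x : Fin k → ℝ} (hx : StrictMono x) (t : ℝ) (j : Fin k) :
    x j ≤ t ↔ (j : ℕ) < Ncnt x t := by
  classical
  constructor
  · intro h
    have hsub : Finset.Iic j ⊆ Finset.univ.filter (fun i : Fin k => x i ≤ t) := by
      intro i hi
      exact Finset.mem_filter.2 ⟨Finset.mem_univ _,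
        le_trans (hx.monotone (Finset.mem_Iic.1 hi)) h⟩
    have hc := Finset.card_le_card hsub
    rw [Fin.card_Iic] at hc
    have : Ncnt x t = (Finset.univ.filter fun i : Fin k => x i ≤ t).card := by
      simp [Ncnt]
    omega
  · intro h
    by_contra hc
    push_neg at hc
    have hsub : Finset.univ.filter (fun i : Fin k => x i ≤ t) ⊆ Finset.Iio j := by
      intro i hi
      exact Finset.mem_Iio.2 (hx.lt_iff_lt.1 (lt_of_le_of_lt (Finset.mem_filter.1 hi).2 hc))
    have hcard := Finset.card_le_card hsub
    rw [Fin.card_Iio] at hcard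
    have : Ncnt x t = (Finset.univ.filter fun i : Fin k => x i ≤ t).card := by
      simp [Ncnt]
    omega

lemma Ncnt_eq_succ {k : ℕ} {x : Fin k → ℝ} (hx : StrictMono x) (t : ℝ) (j : Fin k)
    (h1 : x j ≤ t) (h2 : ∀ i : Fin k, (j : ℕ) < (i : ℕ) → t < x i) :
    Ncnt x t = (j : ℕ) + 1 := by
  have hlt := (Ncnt_mem_iff hx t j).1 h1
  have hub : Ncnt x t ≤ (j : ℕ) + 1 := by
    by_contra hgt
    push_neg at hgt
    have hNk := Ncnt_le x t
    have hjk : (j : ℕ) + 1 < k := by omega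
    have hle : x ⟨(j : ℕ) + 1, hjk⟩ ≤ t := (Ncnt_mem_iff hx t ⟨(j : ℕ) + 1, hjk⟩).2 (by simp only [Fin.val_mk]; omega)
    have := h2 ⟨(j : ℕ) + 1, hjk⟩ (by simp)
    linarith
  omega

lemma Ncnt_eq_zero {k : ℕ} {x : Fin k → ℝ} (hk : 0 < k) (hx : StrictMono x) (t : ℝ)
    (ht : t < x ⟨0, hk⟩) : Ncnt x t = 0 := by
  by_contra h
  have := (Ncnt_mem_iff hx t ⟨0, hk⟩).2 (by simp only [Fin.val_mk]; omega)
  linarith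
open MeasureTheory Filter Set
open scoped Topology

noncomputable def Pfun {k : ℕ} (a b : Fin (k+1) → ℝ) (s : ℝ) (m : Fin (k+1)) (t : ℝ) : ℝ :=
  a m * Real.exp (s*t) + b m * Real.exp (-s*t)

lemma Pfun_continuous {k : ℕ} (a b : Fin (k+1) → ℝ) (s : ℝ) (m : Fin (k+1)) :
    Continuous (Pfun a b s m) := by
  unfold Pfun
  fun_prop

noncomputable def Nfin {k : ℕ} (x : Fin k → ℝ) (t : ℝ) : Fin (k+1) :=
  ⟨Ncnt x t, Nat.lt_succ_of_le (Ncnt_le x t)⟩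

noncomputable def Ffun {k : ℕ} (x : Fin k → ℝ) (a b : Fin (k+1) → ℝ) (s : ℝ) (t : ℝ) : ℝ :=
  Pfun a b s (Nfin x t) t

lemma Nfin_eq_zero {k : ℕ} {x : Fin k → ℝ} (hk : 0 < k) (hx : StrictMono x) {t : ℝ}
    (ht : t < x ⟨0, hk⟩) : Nfin x t = 0 :=
  Fin.ext (by simp [Nfin, Ncnt_eq_zero hk hx t ht])

lemma Nfin_eq_succ {k : ℕ} {x : Fin k → ℝ} (hx : StrictMono x) {t : ℝ} (j : Fin k)
    (h1 : x j ≤ t) (h2 : ∀ i : Fin k, (j : ℕ) < (i : ℕ) → t < x i) : Nfin x t = j.succ :=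
  Fin.ext (by simp [Nfin, Ncnt_eq_succ hx t j h1 h2])

lemma Ffun_continuous {k : ℕ} (hk : 0 < k) (x : Fin k → ℝ) (hx : StrictMono x)
    (a b : Fin (k+1) → ℝ) (s : ℝ)
    (hm : ∀ j : Fin k, Pfun a b s j.castSucc (x j) = Pfun a b s j.succ (x j)) :
    Continuous (Ffun x a b s) := by
  rw [continuous_iff_continuousAt]
  intro t₀
  by_cases hrange : ∃ j : Fin k, x j = t₀
  · obtain ⟨j, hj⟩ := hrange
    -- value at t₀
    have hN₀ : Nfin x t₀ = j.succ :=
      Nfin_eq_succ hx j hj.le (fun i hi => hj ▸ hx (show j < i from hi))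
    have hft₀ : Ffun x a b s t₀ = Pfun a b s j.succ t₀ := by rw [Ffun, hN₀]
    -- right continuity
    have hevr : ∀ᶠ t in 𝓝[≥] t₀, Ffun x a b s t = Pfun a b s j.succ t := by
      have h1 : ∀ᶠ t in 𝓝 t₀, ∀ i : Fin k, t₀ < x i → t < x i := by
        rw [eventually_all]
        intro i
        by_cases hi : t₀ < x i
        · filter_upwards [eventually_lt_nhds hi] with t ht _; exact ht
        · filter_upwards with t ht; exact absurd ht hi
      filter_upwards [h1.filter_mono nhdsWithin_le_nhds,
        eventually_mem_nhdsWithin (s := Set.Ici t₀)] with t h1t h2t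
      have : Nfin x t = j.succ := by
        apply Nfin_eq_succ hx j (le_trans hj.le h2t)
        intro i hi
        exact h1t i (hj ▸ hx (show j < i from hi))
      rw [Ffun, this]
    -- left continuity : Nfin t has value j.castSucc
    have hevl : ∀ᶠ t in 𝓝[<] t₀, Ffun x a b s t = Pfun a b s j.castSucc t := by
      have h1 : ∀ᶠ t in 𝓝 t₀, ∀ i : Fin k, x i < t₀ → x i < t := by
        rw [eventually_all]
        intro i
        by_cases hi : x i < t₀
        · filter_upwards [eventually_gt_nhds hi] with t ht _; exact ht
        · filter_upwards with t ht; exact absurd ht hi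
      filter_upwards [h1.filter_mono nhdsWithin_le_nhds,
        eventually_mem_nhdsWithin (s := Set.Iio t₀)] with t h1t h2t
      have hNt : Nfin x t = j.castSucc := by
        apply Fin.ext
        rcases Nat.eq_zero_or_pos (j : ℕ) with h0 | hpos
        · have hj0 : j = ⟨0, hk⟩ := Fin.ext (by simp [h0])
          have : Ncnt x t = 0 := Ncnt_eq_zero hk hx t (by rw [← hj0, hj]; exact h2t)
          simp [Nfin, this, h0]
        · have hjk : (j : ℕ) - 1 < k := by have := j.isLt; omega
          have : Ncnt x t = ((j : ℕ) - 1) + 1 := by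
            apply Ncnt_eq_succ hx t ⟨(j : ℕ) - 1, hjk⟩
            · apply le_of_lt
              apply h1t
              rw [← hj]
              exact hx (show (⟨(j : ℕ) - 1, hjk⟩ : Fin k) < j by
                simp only [Fin.lt_def, Fin.val_mk]; omega)
            · intro i hi
              simp only [Fin.val_mk] at hi
              have hji : j ≤ i := by simp only [Fin.le_def]; omega
              calc t < t₀ := h2t
                _ = x j := hj.symm
                _ ≤ x i := hx.monotone hji
          simp only [Nfin, this, Fin.coe_castSucc]
          omega
      rw [Ffun, hNt]
    have hL : ContinuousWithinAt (Ffun x a b s) (Set.Iio t₀) t₀ := by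
      apply ContinuousWithinAt.congr_of_eventuallyEq
        ((Pfun_continuous a b s j.castSucc).continuousAt.continuousWithinAt) hevl
      rw [hft₀, ← hj, hm j]
    have hR : ContinuousWithinAt (Ffun x a b s) (Set.Ici t₀) t₀ := by
      apply ContinuousWithinAt.congr_of_eventuallyEq
        ((Pfun_continuous a b s j.succ).continuousAt.continuousWithinAt) hevr
      exact hft₀
    have := hL.union hR
    rwa [Set.Iio_union_Ici, continuousWithinAt_univ] at this
  · push_neg at hrange
    have hev : ∀ᶠ t in 𝓝 t₀, Ffun x a b s t = Pfun a b s (Nfin x t₀) t := by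
      have h1 : ∀ᶠ t in 𝓝 t₀, ∀ i : Fin k, (x i ≤ t ↔ x i ≤ t₀) := by
        rw [eventually_all]
        intro i
        rcases lt_or_gt_of_ne (hrange i) with hi | hi
        · filter_upwards [eventually_gt_nhds hi] with t ht
          simp [ht.le, hi.le]
        · filter_upwards [eventually_lt_nhds hi] with t ht
          constructor
          · intro h; linarith
          · intro h; linarith
      filter_upwards [h1] with t ht
      have : Nfin x t = Nfin x t₀ := by
        apply Fin.ext
        simp only [Nfin]
        unfold Ncnt
        congr 1
        apply Finset.filter_congr
        intro i _
        simp [ht i]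
      rw [Ffun, this]
    exact ContinuousAt.congr ((Pfun_continuous a b s (Nfin x t₀)).continuousAt)
      (hev.mono fun t h => h.symm)
open MeasureTheory Filter Set

lemma expIntIio (c w : ℝ) (hw : 0 < w) :
    IntegrableOn (fun t : ℝ => Real.exp (w*t)) (Set.Iio c) := by
  have h1 : IntegrableOn (fun u : ℝ => Real.exp (-w*u)) (Set.Ioi (-c)) :=
    exp_neg_integrableOn_Ioi (-c) hw
  have h2 := (MeasurePreserving.integrableOn_comp_preimage
    (Measure.measurePreserving_neg (volume : Measure ℝ))
    (Homeomorph.neg ℝ).measurableEmbedding).2 h1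
  have hpre : (Neg.neg : ℝ → ℝ) ⁻¹' Set.Ioi (-c) = Set.Iio c := by
    ext t; simp
  rw [hpre] at h2
  refine IntegrableOn.congr_fun h2 ?_ measurableSet_Iio
  intro t _
  simp only [Function.comp_apply]
  ring_nf


/-- Transfer-matrix characterization of the negative eigenvalues of
`-Δ + ∑_{j=1}^k α_j δ_{x_j}`. Let `λ < 0`, `s = √(-λ)`, and let `(a_j, b_j)` be the
coefficients obtained from `a_0 = 1`, `b_0 = 0` by imposing, at each `x_j`, continuity
and the jump condition `f'(x_j+) - f'(x_j-) = α_j f(x_j)` for the piecewise function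
`f = a_j e^{s x} + b_j e^{-s x}` on `(x_j, x_{j+1})`. Then a nonzero square-integrable
continuous piecewise-exponential eigenfunction satisfying all matching conditions
exists (i.e. `λ` is an eigenvalue) if and only if `a_k = 0`. -/
theorem stmt19
    (k : ℕ) (hk : 0 < k) (x : Fin k → ℝ) (hx : StrictMono x) (α : Fin k → ℝ)
    (lam : ℝ) (hlam : lam < 0)
    (a b : Fin (k + 1) → ℝ) (ha0 : a 0 = 1) (hb0 : b 0 = 0)
    (hmatch : ∀ j : Fin k,
      (a j.castSucc * Real.exp (Real.sqrt (-lam) * x j) +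
          b j.castSucc * Real.exp (-(Real.sqrt (-lam)) * x j) =
        a j.succ * Real.exp (Real.sqrt (-lam) * x j) +
          b j.succ * Real.exp (-(Real.sqrt (-lam)) * x j)) ∧
      (Real.sqrt (-lam) * (a j.succ * Real.exp (Real.sqrt (-lam) * x j) -
            b j.succ * Real.exp (-(Real.sqrt (-lam)) * x j)) -
          Real.sqrt (-lam) * (a j.castSucc * Real.exp (Real.sqrt (-lam) * x j) -
            b j.castSucc * Real.exp (-(Real.sqrt (-lam)) * x j)) =
        α j * (a j.succ * Real.exp (Real.sqrt (-lam) * x j) +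
          b j.succ * Real.exp (-(Real.sqrt (-lam)) * x j)))) :
    (∃ (c d : Fin (k + 1) → ℝ) (f : ℝ → ℝ),
      Continuous f ∧
      (∀ t : ℝ, t < x ⟨0, hk⟩ →
        f t = c 0 * Real.exp (Real.sqrt (-lam) * t) +
          d 0 * Real.exp (-(Real.sqrt (-lam)) * t)) ∧
      (∀ (j : Fin k) (t : ℝ), x j < t → (∀ i : Fin k, x j < x i → t < x i) →
        f t = c j.succ * Real.exp (Real.sqrt (-lam) * t) +
          d j.succ * Real.exp (-(Real.sqrt (-lam)) * t)) ∧
      (∀ j : Fin k,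
        (c j.castSucc * Real.exp (Real.sqrt (-lam) * x j) +
            d j.castSucc * Real.exp (-(Real.sqrt (-lam)) * x j) =
          c j.succ * Real.exp (Real.sqrt (-lam) * x j) +
            d j.succ * Real.exp (-(Real.sqrt (-lam)) * x j)) ∧
        (Real.sqrt (-lam) * (c j.succ * Real.exp (Real.sqrt (-lam) * x j) -
              d j.succ * Real.exp (-(Real.sqrt (-lam)) * x j)) -
            Real.sqrt (-lam) * (c j.castSucc * Real.exp (Real.sqrt (-lam) * x j) -
              d j.castSucc * Real.exp (-(Real.sqrt (-lam)) * x j)) =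
          α j * (c j.succ * Real.exp (Real.sqrt (-lam) * x j) +
            d j.succ * Real.exp (-(Real.sqrt (-lam)) * x j)))) ∧
      MemLp f 2 volume ∧ f ≠ 0) ↔
    a (Fin.last k) = 0 := by
  have hs : 0 < Real.sqrt (-lam) := Real.sqrt_pos.2 (by linarith)
  set s := Real.sqrt (-lam) with hsdef
  have hklt : k - 1 < k := Nat.sub_lt hk one_pos
  set x0 := x ⟨0, hk⟩ with hx0def
  set xl := x ⟨k - 1, hklt⟩ with hxldef
  have hx0l : x0 ≤ xl := hx.monotone (by simp only [Fin.le_def, Fin.val_mk]; omega)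
  have hjl_max : ∀ i : Fin k, x i ≤ xl :=
    fun i => hx.monotone (by simp only [Fin.le_def, Fin.val_mk]; omega)
  have hsucc_jl : (⟨k - 1, hklt⟩ : Fin k).succ = Fin.last k := by
    apply Fin.ext; simp only [Fin.val_succ, Fin.val_mk, Fin.val_last]; omega
  constructor
  · rintro ⟨c, d, f, hfc, hIio, hmid, hcd, hL2, hne⟩
    have hInt : Integrable (fun t => f t ^ 2) volume :=
      (memLp_two_iff_integrable_sq hfc.aestronglyMeasurable).1 hL2
    have hlastf : ∀ t : ℝ, xl < t →
        f t = c (Fin.last k) * Real.exp (s * t) + d (Fin.last k) * Real.exp (-s * t) := by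
      intro t ht
      have := hmid ⟨k - 1, hklt⟩ t ht
        (fun i hi => absurd (hjl_max i) (not_le.2 hi))
      rwa [hsucc_jl] at this
    -- Step 1: d 0 = 0
    have hd0 : d 0 = 0 := by
      by_contra hd0
      have htend : Tendsto (fun t => |c 0 * Real.exp (s * t) + d 0 * Real.exp (-s * t)|)
          atBot atTop := by
        have h := (absTendsto s (d 0) (c 0) hs hd0).comp tendsto_neg_atBot_atTop
        refine h.congr fun t => ?_
        simp only [Function.comp_apply]
        rw [show s * -t = -s * t by ring, show -s * -t = s * t by ring, add_comm]
      obtain ⟨T, hT⟩ := Filter.eventually_atBot.1 (htend.eventually (eventually_ge_atTop 1))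
      apply sqBig_below hInt (min T x0)
      intro t ht
      have h1 := hT t (le_of_lt (lt_of_lt_of_le ht (min_le_left _ _)))
      have h2 := hIio t (lt_of_lt_of_le ht (min_le_right _ _))
      have h3 : (1 : ℝ) ≤ |f t| := by rw [h2]; exact h1
      nlinarith [sq_abs (f t), abs_nonneg (f t)]
    -- Step 2: c last = 0
    have hclast : c (Fin.last k) = 0 := by
      by_contra hc0
      have htend := absTendsto s (c (Fin.last k)) (d (Fin.last k)) hs hc0
      obtain ⟨T, hT⟩ := Filter.eventually_atTop.1 (htend.eventually (eventually_ge_atTop 1))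
      apply sqBig_above hInt (max T xl)
      intro t ht
      have h1 := hT t (le_of_lt (lt_of_le_of_lt (le_max_left _ _) ht))
      have h2 := hlastf t (lt_of_le_of_lt (le_max_right _ _) ht)
      have h3 : (1 : ℝ) ≤ |f t| := by rw [h2]; exact h1
      nlinarith [sq_abs (f t), abs_nonneg (f t)]
    -- Step 3: scaling
    have hscale : ∀ j : Fin (k + 1), c j = c 0 * a j ∧ d j = c 0 * b j := by
      intro j
      induction j using Fin.induction with
      | zero => exact ⟨by rw [ha0]; ring, by rw [hb0, hd0]; ring⟩
      | succ i ih =>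
        exact stepScale s (α i) _ _ _ _ _ _ _ _ _ _ (c 0) hs.ne'
          (Real.exp_ne_zero _) (Real.exp_ne_zero _)
          (hmatch i).1 (hmatch i).2 (hcd i).1 (hcd i).2 ih.1 ih.2
    -- Step 4: conclude
    by_cases h0 : c 0 = 0
    · exfalso
      apply hne
      have hall : ∀ j : Fin (k + 1), c j = 0 ∧ d j = 0 := by
        intro j
        obtain ⟨h1, h2⟩ := hscale j
        rw [h0] at h1 h2
        simp at h1 h2
        exact ⟨h1, h2⟩
      have hEqOn : Set.EqOn f 0 (Set.range x)ᶜ := by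
        intro t ht
        simp only [Set.mem_compl_iff, Set.mem_range, not_exists] at ht
        rcases lt_or_ge t x0 with h | h
        · rw [hIio t h, (hall 0).1, (hall 0).2]; simp
        · classical
          set S := Finset.univ.filter (fun i : Fin k => x i < t) with hSdef
          have hS0 : (⟨0, hk⟩ : Fin k) ∈ S :=
            Finset.mem_filter.2 ⟨Finset.mem_univ _, lt_of_le_of_ne h (ht _)⟩
          have hSne : S.Nonempty := ⟨_, hS0⟩
          set j := S.max' hSne with hjdef
          have hj1 : x j < t := (Finset.mem_filter.1 (S.max'_mem hSne)).2
          have hj2 : ∀ i : Fin k, x j < x i → t < x i := by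
            intro i hi
            have hiS : i ∉ S := by
              intro hiS
              exact absurd (hx.monotone (S.le_max' i hiS)) (not_le.2 hi)
            have hle : ¬ x i < t := fun hlt => hiS (Finset.mem_filter.2 ⟨Finset.mem_univ _, hlt⟩)
            exact lt_of_le_of_ne (not_lt.1 hle) (fun he => ht i he.symm)
          rw [hmid j t hj1 hj2, (hall j.succ).1, (hall j.succ).2]; simp
      have hdense : Dense ((Set.range x)ᶜ) := (Set.finite_range x).countable.dense_compl ℝ
      exact Continuous.ext_on hdense hfc continuous_const hEqOn
    · have h1 : c 0 * a (Fin.last k) = 0 := by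
        rw [← (hscale (Fin.last k)).1]; exact hclast
      exact (mul_eq_zero.1 h1).resolve_left h0
  · intro halast
    have hm' : ∀ j : Fin k, Pfun a b s j.castSucc (x j) = Pfun a b s j.succ (x j) := by
      intro j
      simpa [Pfun] using (hmatch j).1
    have hcont : Continuous (Ffun x a b s) := Ffun_continuous hk x hx a b s hm'
    refine ⟨a, b, Ffun x a b s, hcont, ?_, ?_, hmatch, ?_, ?_⟩
    · intro t ht
      rw [Ffun, Nfin_eq_zero hk hx ht]
      simp [Pfun]
    · intro j t ht hall
      rw [Ffun, Nfin_eq_succ hx j ht.le (fun i hi => hall i (hx hi))]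
      simp [Pfun]
    · -- Memℒp
      apply (memLp_two_iff_integrable_sq hcont.aestronglyMeasurable).2
      have h2s : (0 : ℝ) < 2 * s := by linarith
      have h1 : IntegrableOn (fun t => Ffun x a b s t ^ 2) (Set.Iio x0) := by
        refine IntegrableOn.congr_fun (expIntIio x0 (2 * s) h2s) ?_ measurableSet_Iio
        intro t ht
        have hN := Nfin_eq_zero hk hx ht
        simp only [Ffun, hN, Pfun, ha0, hb0, one_mul, zero_mul, add_zero]
        rw [sq, ← Real.exp_add]
        ring_nf
      have h2 : IntegrableOn (fun t => Ffun x a b s t ^ 2) (Set.Icc x0 xl) :=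
        (hcont.pow 2).integrableOn_Icc
      have h3 : IntegrableOn (fun t => Ffun x a b s t ^ 2) (Set.Ioi xl) := by
        have hbase : IntegrableOn
            (fun t => (b (Fin.last k)) ^ 2 * Real.exp (-(2 * s) * t)) (Set.Ioi xl) :=
          (exp_neg_integrableOn_Ioi xl h2s).const_mul _
        refine IntegrableOn.congr_fun hbase ?_ measurableSet_Ioi
        intro t ht
        have hN : Nfin x t = Fin.last k := by
          rw [Nfin_eq_succ hx ⟨k - 1, hklt⟩ (le_of_lt ht)
            (fun i hi => by simp only [Fin.val_mk] at hi; have := i.isLt; omega), hsucc_jl]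
        simp only [Ffun, hN, Pfun, halast, zero_mul, zero_add]
        rw [mul_pow, sq (Real.exp (-s * t)), ← Real.exp_add]
        ring_nf
      rw [← integrableOn_univ]
      refine ((h1.union h2).union h3).mono_set ?_
      intro t _
      simp only [Set.mem_union, Set.mem_Iio, Set.mem_Icc, Set.mem_Ioi]
      rcases lt_or_ge t x0 with h | h
      · exact Or.inl (Or.inl h)
      · rcases le_or_gt t xl with h' | h'
        · exact Or.inl (Or.inr ⟨h, h'⟩)
        · exact Or.inr h'
    · intro h0
      have h1 : Ffun x a b s (x0 - 1) = 0 := by rw [h0]; rfl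
      rw [Ffun, Nfin_eq_zero hk hx (by linarith : x0 - 1 < x0)] at h1
      simp only [Pfun, ha0, hb0, one_mul, zero_mul, add_zero] at h1
      exact (Real.exp_pos _).ne' h1
end
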